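/- arXiv:1511.04578 — 5 statements merged into one kernel-verified Lean document; each statement's English description precedes it below -/
import Mathlib

section
/- Fix 0 < r < 1. The union U = ⋃_{x ∈ (-1,1)} D_ρ(x,r) of all pseudohyperbolic disks of radius r centered on the real axis is contained in the cone Δ(β) = {z ∈ D : |Im z| < tan β · (1 - Re z)} with tan β = 2r/(1-r²). -/
open Complex

lemma my_lt_of_sq (u v : ℝ) (h : u^2 < v^2) (hv : 0 < v) : u < v := by
  nlinarith

lemma key_lemma (a b x r : ℝ) (hx0 : -1 < x) (hx1 : x < 1) (hr0 : 0 < r) (hr1 : r < 1)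
    (H : (a - x)^2 + b^2 < r^2 * ((1 - x*a)^2 + x^2*b^2)) :
    (1 - r^2) * b < 2*r*(1-a) := by
  have hr2 : 0 < 1 - r^2 := by nlinarith
  have hx2 : 0 < 1 - x^2 := by nlinarith
  have hD : 0 < 1 - r^2*x^2 := by nlinarith [mul_pos hr2 hx2]
  have h1 : ((1 - r^2*x^2)*a - x*(1-r^2))^2 + (1 - r^2*x^2)^2*b^2 < r^2*(1-x^2)^2 := by
    have hS := mul_pos hD (sub_pos.mpr H)
    have e1 : r^2*(1-x^2)^2 - (((1 - r^2*x^2)*a - x*(1-r^2))^2 + (1 - r^2*x^2)^2*b^2)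
        = (1 - r^2*x^2) * (r^2*((1 - x*a)^2 + x^2*b^2) - ((a - x)^2 + b^2)) := by ring
    linarith [hS, e1]
  have h1' := mul_lt_mul_of_pos_left h1 (by positivity : (0:ℝ) < (1+r^2)^2)
  have h2 : (2*r*((1 - r^2*x^2)*a - x*(1-r^2)) + (1-r^2)*((1 - r^2*x^2)*b))^2
      < ((1+r^2)*(r*(1-x^2)))^2 := by
    have e2 : (2*r*((1 - r^2*x^2)*a - x*(1-r^2)) + (1-r^2)*((1 - r^2*x^2)*b))^2
        + (2*r*((1 - r^2*x^2)*b) - (1-r^2)*((1 - r^2*x^2)*a - x*(1-r^2)))^2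
        = (1+r^2)^2 * (((1 - r^2*x^2)*a - x*(1-r^2))^2 + (1 - r^2*x^2)^2*b^2) := by ring
    linarith [h1', sq_nonneg (2*r*((1 - r^2*x^2)*b) - (1-r^2)*((1 - r^2*x^2)*a - x*(1-r^2))), e2]
  have hv : 0 < (1+r^2)*(r*(1-x^2)) := mul_pos (by positivity) (mul_pos hr0 hx2)
  have h3 : 2*r*((1 - r^2*x^2)*a - x*(1-r^2)) + (1-r^2)*((1 - r^2*x^2)*b)
      < (1+r^2)*(r*(1-x^2)) := my_lt_of_sq _ _ h2 hv
  have h4 : 0 < (1 - r^2*x^2) * (2*r*(1-a) - (1-r^2)*b) := by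
    have hnn : 0 ≤ r*(1-r^2)*(1-x)^2 := by positivity
    have e3 : (1 - r^2*x^2) * (2*r*(1-a) - (1-r^2)*b)
        = r*(1-r^2)*(1-x)^2 + ((1+r^2)*(r*(1-x^2))
          - (2*r*((1 - r^2*x^2)*a - x*(1-r^2)) + (1-r^2)*((1 - r^2*x^2)*b))) := by ring
    linarith [hnn, h3, e3]
  rcases mul_pos_iff.mp h4 with ⟨_, h⟩ | ⟨h, _⟩ <;> linarith

theorem union_pseudohyperbolic_disks_subset_cone (r : ℝ) (hr0 : 0 < r) (hr1 : r < 1) :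
    (⋃ x ∈ Set.Ioo (-1 : ℝ) 1,
        {z : ℂ | ‖z‖ < 1 ∧ ‖(z - (x : ℂ)) / (1 - (x : ℂ) * z)‖ < r}) ⊆
      {z : ℂ | ‖z‖ < 1 ∧ |z.im| < (2 * r / (1 - r ^ 2)) * (1 - z.re)} := by
  intro z hz
  simp only [Set.mem_iUnion, Set.mem_setOf_eq] at hz ⊢
  obtain ⟨x, hx, hz1, hz2⟩ := hz
  obtain ⟨hx0, hx1⟩ := hx
  refine ⟨hz1, ?_⟩
  set a := z.re with ha
  set b := z.im with hb
  have habs : a^2 + b^2 < 1 := by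
    have := Complex.sq_norm z
    nlinarith [hz1, norm_nonneg z, Complex.normSq_apply z]
  -- denominator nonzero
  have hxz : ‖(x:ℂ) * z‖ < 1 := by
    rw [norm_mul]
    have h1 : ‖(x:ℂ)‖ ≤ 1 := by
      rw [Complex.norm_real, Real.norm_eq_abs]
      rw [abs_le]; constructor <;> linarith
    calc ‖(x:ℂ)‖ * ‖z‖ ≤ 1 * ‖z‖ := by
          apply mul_le_mul_of_nonneg_right h1 (norm_nonneg z)
      _ = ‖z‖ := one_mul _
      _ < 1 := hz1
  have hden : (1 : ℂ) - (x:ℂ) * z ≠ 0 := by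
    intro h
    have : (1:ℂ) = (x:ℂ)*z := by linear_combination h
    rw [← this] at hxz
    simp at hxz
  have hden' : ‖1 - (x:ℂ)*z‖ ≠ 0 := norm_ne_zero_iff.mpr hden
  have hnum : ‖z - (x:ℂ)‖ < r * ‖1 - (x:ℂ)*z‖ := by
    rw [norm_div] at hz2
    rw [div_lt_iff₀ (lt_of_le_of_ne (norm_nonneg _) (Ne.symm hden'))] at hz2
    linarith [hz2]
  have H : (a - x)^2 + b^2 < r^2 * ((1 - x*a)^2 + x^2*b^2) := by
    have h1 : Complex.normSq (z - (x:ℂ)) < r^2 * Complex.normSq (1 - (x:ℂ)*z) := by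
      have := Complex.sq_norm (z - (x:ℂ))
      have := Complex.sq_norm (1 - (x:ℂ)*z)
      nlinarith [hnum, norm_nonneg (z - (x:ℂ)), norm_nonneg (1 - (x:ℂ)*z), hr0]
    have e1 : Complex.normSq (z - (x:ℂ)) = (a - x)^2 + b^2 := by
      simp [Complex.normSq_apply, ha, hb]; ring
    have e2 : Complex.normSq (1 - (x:ℂ)*z) = (1 - x*a)^2 + x^2*b^2 := by
      simp [Complex.normSq_apply, ha, hb]; ring
    rw [e1, e2] at h1; exact h1
  have k1 : (1 - r^2) * b < 2*r*(1-a) := key_lemma a b x r hx0 hx1 hr0 hr1 H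
  have k2 : (1 - r^2) * (-b) < 2*r*(1-a) := by
    apply key_lemma a (-b) x r hx0 hx1 hr0 hr1
    nlinarith [H]
  have hr2 : 0 < 1 - r^2 := by nlinarith
  have habsb : |b| * (1 - r^2) < 2*r*(1-a) := by
    rcases abs_cases b with ⟨h, _⟩ | ⟨h, _⟩ <;> rw [h] <;> nlinarith
  rw [div_mul_eq_mul_div, lt_div_iff₀ hr2]
  linarith [habsb]
end

section
/- Fix 0 < r < 1. The union ⋃_{x∈(-1,1)} D_ρ(x,r) equals the set of points z in the unit disk lying strictly between the circle of center -i(1-r²)/(2r) and radius (1+r²)/(2r) and its reflection across the real axis; i.e., z ∈ ⋃_x D_ρ(x,r) iff |z + i(1-r²)/(2r)| < (1+r²)/(2r) and |z - i(1-r²)/(2r)| < (1+r²)/(2r). -/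
open Complex

lemma abs_lt_iff_normSq (w : ℂ) (c : ℝ) (hc : 0 < c) :
    ‖w‖ < c ↔ Complex.normSq w < c^2 := by
  rw [← Complex.sq_norm]
  exact (pow_lt_pow_iff_left₀ (norm_nonneg w) hc.le two_ne_zero).symm

lemma mem_disk_iff (r x : ℝ) (hr0 : 0 < r) (hx : x ∈ Set.Ioo (-1:ℝ) 1) (z : ℂ)
    (hz : ‖z‖ < 1) :
    ‖(z - (x:ℂ)) / (1 - (x:ℂ) * z)‖ < r ↔
      Complex.normSq (z - (x:ℂ)) < r^2 * Complex.normSq (1 - (x:ℂ)*z) := by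
  have hxz : ‖(x:ℂ)*z‖ < 1 := by
    rw [norm_mul, Complex.norm_real, Real.norm_eq_abs]
    have h1 : |x| < 1 := abs_lt.mpr ⟨hx.1, hx.2⟩
    have h2 : (0:ℝ) ≤ ‖z‖ := norm_nonneg z
    nlinarith [abs_nonneg x]
  have hne : (1 : ℂ) - (x:ℂ)*z ≠ 0 := by
    intro h
    have : (x:ℂ)*z = 1 := by linear_combination -h
    rw [this] at hxz
    simp at hxz
  have hpos : 0 < ‖1 - (x:ℂ)*z‖ := by
    simpa [norm_pos_iff] using hne
  rw [norm_div, div_lt_iff₀ hpos]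
  constructor
  · intro h
    have := pow_lt_pow_left₀ h (norm_nonneg _) two_ne_zero
    rw [mul_pow, Complex.sq_norm, Complex.sq_norm] at this
    linarith
  · intro h
    have h2 : (‖z - (x:ℂ)‖)^2 < (r * ‖1 - (x:ℂ)*z‖)^2 := by
      rw [mul_pow, Complex.sq_norm, Complex.sq_norm]; linarith
    exact (pow_lt_pow_iff_left₀ (norm_nonneg _) (by positivity) two_ne_zero).mp h2

set_option maxHeartbeats 1000000 in
theorem union_pseudohyperbolic_disks_eq_lens (r : ℝ) (hr0 : 0 < r) (hr1 : r < 1) (z : ℂ) :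
    (z ∈ ⋃ x ∈ Set.Ioo (-1 : ℝ) 1,
        {z : ℂ | ‖z‖ < 1 ∧ ‖(z - (x : ℂ)) / (1 - (x : ℂ) * z)‖ < r}) ↔
      ‖z + Complex.I * ((1 - r ^ 2) / (2 * r))‖ < (1 + r ^ 2) / (2 * r) ∧
      ‖z - Complex.I * ((1 - r ^ 2) / (2 * r))‖ < (1 + r ^ 2) / (2 * r) := by
  set a := z.re with ha
  set b := z.im with hb
  have hR : (0:ℝ) < (1 + r^2)/(2*r) := by positivity
  have hcast : ((1 : ℂ) - (r:ℂ)^2) / (2*(r:ℂ)) = (((1 - r^2)/(2*r) : ℝ) : ℂ) := by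
    push_cast; ring
  have hIc : Complex.I * ((1 - (r:ℂ) ^ 2) / (2 * (r:ℂ)))
      = Complex.I * (((1 - r^2)/(2*r) : ℝ) : ℂ) := by rw [hcast]
  have hIcre : (Complex.I * (((1 - r^2)/(2*r) : ℝ) : ℂ)).re = 0 := by
    rw [Complex.mul_re, Complex.I_re, Complex.I_im, Complex.ofReal_re, Complex.ofReal_im]; ring
  have hIcim : (Complex.I * (((1 - r^2)/(2*r) : ℝ) : ℂ)).im = (1 - r^2)/(2*r) := by
    rw [Complex.mul_im, Complex.I_re, Complex.I_im, Complex.ofReal_re, Complex.ofReal_im]; ring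
  have hplus : Complex.normSq (z + Complex.I * ((1 - (r:ℂ) ^ 2) / (2 * (r:ℂ))))
      = a^2 + (b + (1 - r^2)/(2*r))^2 := by
    rw [hIc, Complex.normSq_apply, Complex.add_re, Complex.add_im, hIcre, hIcim]; ring
  have hminus : Complex.normSq (z - Complex.I * ((1 - (r:ℂ) ^ 2) / (2 * (r:ℂ))))
      = a^2 + (b - (1 - r^2)/(2*r))^2 := by
    rw [hIc, Complex.normSq_apply, Complex.sub_re, Complex.sub_im, hIcre, hIcim]; ring
  have hnz : Complex.normSq z = a^2 + b^2 := by rw [Complex.normSq_apply]; ring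
  have hclear : ∀ u : ℝ, (a^2 + (b + u/(2*r))^2 < ((1+r^2)/(2*r))^2 ↔
      (2*r)^2 * a^2 + (2*r*b + u)^2 < (1+r^2)^2) := by
    intro u
    have h4 : (0:ℝ) < (2*r)^2 := by positivity
    rw [← mul_lt_mul_iff_of_pos_right h4]
    have e1 : (a^2 + (b + u/(2*r))^2) * (2*r)^2 = (2*r)^2*a^2 + (2*r*b + u)^2 := by
      field_simp
    have e2 : ((1+r^2)/(2*r))^2 * (2*r)^2 = (1+r^2)^2 := by
      field_simp
    rw [e1, e2]
  rw [abs_lt_iff_normSq _ _ hR, abs_lt_iff_normSq _ _ hR, hplus, hminus,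
    show (b - (1-r^2)/(2*r)) = b + (-(1-r^2))/(2*r) by ring,
    hclear, hclear]
  clear hclear hplus hminus hIc hIcre hIcim hcast
  constructor
  · intro hz
    simp only [Set.mem_iUnion, Set.mem_setOf_eq] at hz
    obtain ⟨x, hx, hz1, hz2⟩ := hz
    rw [mem_disk_iff r x hr0 hx z hz1] at hz2
    have hs : a^2 + b^2 < 1 := by
      have := (abs_lt_iff_normSq z 1 one_pos).mp hz1
      rw [hnz] at this; nlinarith
    have hz2' : (a - x)^2 + b^2 < r^2 * ((1 - x*a)^2 + (x*b)^2) := by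
      have e1 : Complex.normSq (z - (x:ℂ)) = (a - x)^2 + b^2 := by
        rw [Complex.normSq_apply]; simp [ha, hb]; ring
      have e2 : Complex.normSq (1 - (x:ℂ)*z) = (1 - x*a)^2 + (x*b)^2 := by
        rw [Complex.normSq_apply]; simp [ha, hb, Complex.mul_re, Complex.mul_im]; ring
      rw [e1, e2] at hz2; exact hz2
    have h1 : (0:ℝ) < 1 - r^2*(a^2+b^2) := by
      nlinarith [mul_nonneg (mul_nonneg hr0.le hr0.le) (add_nonneg (sq_nonneg a) (sq_nonneg b))]
    have hprod : (1 - r^2*(a^2+b^2)) * ((a-x)^2 + b^2 - r^2*((1 - x*a)^2 + (x*b)^2)) < 0 :=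
      mul_neg_of_pos_of_neg h1 (by linarith)
    have hkey : (b*(1-r^2))^2 < (r*(1-(a^2+b^2)))^2 := by
      nlinarith [hprod, sq_nonneg ((1 - r^2*(a^2+b^2))*x - a*(1-r^2))]
    have hAB := abs_lt_of_sq_lt_sq' hkey (by nlinarith)
    obtain ⟨hb2, hb1⟩ := hAB
    constructor
    · nlinarith [mul_lt_mul_of_pos_left hb1 (show (0:ℝ) < 4*r by linarith)]
    · nlinarith [mul_lt_mul_of_pos_left hb2 (show (0:ℝ) < 4*r by linarith)]
  · rintro ⟨hA, hB⟩
    have hs : a^2 + b^2 < 1 := by nlinarith [hA, hB, mul_pos hr0 hr0]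
    have hb1 : b*(1-r^2) < r*(1-(a^2+b^2)) := by nlinarith [hA, hr0, mul_pos hr0 hr0]
    have hb2 : -(r*(1-(a^2+b^2))) < b*(1-r^2) := by nlinarith [hB, hr0, mul_pos hr0 hr0]
    have hkey : (b*(1-r^2))^2 < (r*(1-(a^2+b^2)))^2 :=
      sq_lt_sq' hb2 hb1
    have h1 : (0:ℝ) < 1 - r^2*(a^2+b^2) := by
      nlinarith [mul_nonneg (mul_nonneg hr0.le hr0.le) (add_nonneg (sq_nonneg a) (sq_nonneg b))]
    have ht1 : (0:ℝ) < 1 - r^4*(a^2+b^2) := by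
      nlinarith [mul_nonneg (mul_nonneg (sq_nonneg r) (sq_nonneg r))
        (add_nonneg (sq_nonneg a) (sq_nonneg b)), sq_nonneg (r^2)]
    have hxbound : (a*(1-r^2))^2 < (1 - r^2*(a^2+b^2))^2 := by
      nlinarith [mul_pos ht1 (show (0:ℝ) < 1 - (a^2+b^2) by linarith),
        sq_nonneg (b*(1-r^2))]
    obtain ⟨hxl, hxr⟩ := abs_lt_of_sq_lt_sq' hxbound h1.le
    set x : ℝ := a*(1-r^2)/(1 - r^2*(a^2+b^2)) with hxdef
    have hxIoo : x ∈ Set.Ioo (-1:ℝ) 1 := by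
      constructor
      · rw [hxdef, lt_div_iff₀ h1]; linarith
      · rw [hxdef, div_lt_one h1]; linarith
    have hz1 : ‖z‖ < 1 := by
      rw [abs_lt_iff_normSq z 1 one_pos, hnz]; nlinarith
    have hxeq : (1 - r^2*(a^2+b^2)) * x = a*(1-r^2) := by
      rw [hxdef]; field_simp
    have hQ : ((1 - r^2*(a^2+b^2))*x - a*(1-r^2))^2 = 0 := by
      rw [show (1 - r^2*(a^2+b^2))*x - a*(1-r^2) = 0 by rw [hxeq]; ring]
      exact zero_pow two_ne_zero
    have hiden : (1 - r^2*(a^2+b^2)) * ((a - x)^2 + b^2 - r^2*((1 - x*a)^2 + (x*b)^2))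
        = ((1 - r^2*(a^2+b^2))*x - a*(1-r^2))^2
          + ((b*(1-r^2))^2 - (r*(1-(a^2+b^2)))^2) := by ring
    have hneg : (1 - r^2*(a^2+b^2)) * ((a - x)^2 + b^2 - r^2*((1 - x*a)^2 + (x*b)^2)) < 0 := by
      rw [hiden, hQ]; linarith [hkey]
    have hf : (a - x)^2 + b^2 < r^2 * ((1 - x*a)^2 + (x*b)^2) := by
      by_contra hcon
      push_neg at hcon
      exact absurd hneg (not_lt.mpr (mul_nonneg h1.le (by linarith)))
    simp only [Set.mem_iUnion, Set.mem_setOf_eq]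
    refine ⟨x, hxIoo, hz1, ?_⟩
    rw [mem_disk_iff r x hr0 hxIoo z hz1]
    have e1 : Complex.normSq (z - (x:ℂ)) = (a - x)^2 + b^2 := by
      rw [Complex.normSq_apply]; simp [ha, hb]; ring
    have e2 : Complex.normSq (1 - (x:ℂ)*z) = (1 - x*a)^2 + (x*b)^2 := by
      rw [Complex.normSq_apply]; simp [ha, hb, Complex.mul_re, Complex.mul_im]; ring
    rw [e1, e2]; exact hf
end

section
/- Equality case of the Schwarz–Pick Lemma: if f : D → D is holomorphic and ρ(f(z₀),f(w₀)) = ρ(z₀,w₀) for some pair z₀ ≠ w₀ in D, then f is a conformal automorphism of D, i.e., f(z) = e^{iθ}(a-z)/(1-conj(a)z) for some a ∈ D and θ ∈ [0,2π). -/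
open Complex

lemma denom_ne (a w : ℂ) (ha : ‖a‖ < 1) (hw : ‖w‖ < 1) :
    1 - (starRingEnd ℂ) a * w ≠ 0 := by
  intro h
  have h1 : (1 : ℂ) = (starRingEnd ℂ) a * w := by linear_combination h
  have := congrArg (‖·‖) h1
  simp [map_mul] at this
  nlinarith [norm_nonneg a, norm_nonneg w]

lemma mobius_mem (a w : ℂ) (ha : ‖a‖ < 1) (hw : ‖w‖ < 1) :
    ‖(a - w) / (1 - (starRingEnd ℂ) a * w)‖ < 1 := by
  rw [norm_div, div_lt_one (norm_pos_iff.mpr (denom_ne a w ha hw))]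
  have ha' : Complex.normSq a < 1 := by rw [← Complex.sq_norm]; nlinarith [norm_nonneg a]
  have hw' : Complex.normSq w < 1 := by rw [← Complex.sq_norm]; nlinarith [norm_nonneg w]
  have h1 : Complex.normSq (a - w) < Complex.normSq (1 - (starRingEnd ℂ) a * w) := by
    simp only [Complex.normSq_apply, Complex.sub_re, Complex.sub_im, Complex.mul_re,
      Complex.mul_im, Complex.one_re, Complex.one_im, Complex.conj_re, Complex.conj_im] at *
    nlinarith [sq_nonneg (a.re * w.im - a.im * w.re), sq_nonneg (a.re * w.re + a.im * w.im)]
  rw [Complex.norm_def, Complex.norm_def]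
  exact Real.sqrt_lt_sqrt (Complex.normSq_nonneg _) h1

lemma mobius_invol (a w : ℂ) (ha : ‖a‖ < 1) (hw : ‖w‖ < 1) :
    (a - (a - w) / (1 - (starRingEnd ℂ) a * w)) /
      (1 - (starRingEnd ℂ) a * ((a - w) / (1 - (starRingEnd ℂ) a * w))) = w := by
  have h1 := denom_ne a w ha hw
  have h2 := denom_ne a a ha ha
  have h1' : 1 - w * (starRingEnd ℂ) a ≠ 0 := by rwa [mul_comm] at h1
  field_simp
  have hden : 1 - w * (starRingEnd ℂ) a - (a - w) * (starRingEnd ℂ) a ≠ 0 := by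
    intro h; apply h2; linear_combination h
  rw [div_eq_iff hden]
  ring

lemma mobius_diff (a : ℂ) (ha : ‖a‖ < 1) :
    DifferentiableOn ℂ (fun z => (a - z) / (1 - (starRingEnd ℂ) a * z))
      (Metric.ball (0 : ℂ) 1) := by
  apply DifferentiableOn.div
  · exact (differentiableOn_const a).sub differentiableOn_id
  · exact (differentiableOn_const 1).sub ((differentiableOn_const _).mul differentiableOn_id)
  · intro x hx
    exact denom_ne a x ha (by simpa [Metric.mem_ball, Complex.dist_eq] using hx)

lemma key_alg (a b z C A B Cc : ℂ) (hC0 : C ≠ 0) (hCc : Cc = C⁻¹)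
    (hd1 : 1 - A * z ≠ 0)
    (hd2 : 1 - B * (C * ((a - z) / (1 - A * z))) ≠ 0)
    (hQ : C - b * A ≠ 0)
    (hQc : Cc - B * a ≠ 0)
    (hd3 : 1 - ((Cc * A - B) / (Cc - B * a)) * z ≠ 0) :
    (b - C * ((a - z) / (1 - A * z))) / (1 - B * (C * ((a - z) / (1 - A * z)))) =
    ((b * A - C) / (C * (Cc - B * a))) *
      (((C * a - b) / (C - b * A) - z) / (1 - ((Cc * A - B) / (Cc - B * a)) * z)) := by
  subst hCc
  have hd1r : 1 - z * A ≠ 0 := by rwa [mul_comm] at hd1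
  have hQc' : 1 - C * (B * a) ≠ 0 := by
    intro h; apply hQc
    have : C * (C⁻¹ - B * a) = 0 := by field_simp; linear_combination h
    rcases mul_eq_zero.1 this with h' | h'
    · exact absurd h' hC0
    · exact h'
  have hd2' : (1 - A * z) - B * (C * (a - z)) ≠ 0 := by
    intro h; apply hd2
    field_simp
    linear_combination h
  have hQcr : 1 - C * B * a ≠ 0 := by rwa [← mul_assoc] at hQc'
  have hd3' : (1 - C * (B * a)) - (A - C * B) * z ≠ 0 := by
    intro h; apply hd3
    field_simp
    linear_combination h
  have e1 : (C⁻¹ * A - B) / (C⁻¹ - B * a) = (A - C * B) / (1 - C * (B * a)) := by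
    rw [div_eq_div_iff hQc hQc']; field_simp
  have e2 : C * (C⁻¹ - B * a) = 1 - C * (B * a) := by field_simp
  have e3 : 1 - (A - C * B) / (1 - C * (B * a)) * z =
      ((1 - C * (B * a)) - (A - C * B) * z) / (1 - C * (B * a)) := by
    field_simp
  have e4 : 1 - B * (C * ((a - z) / (1 - A * z))) = ((1 - A * z) - B * (C * (a - z))) / (1 - A * z) := by
    field_simp
  have hL : (b - C * ((a - z) / (1 - A * z))) * (1 - A * z) = b * (1 - A * z) - C * (a - z) := by
    field_simp
  have hR : (C * a - b) / (C - b * A) - z = ((C * a - b) - z * (C - b * A)) / (C - b * A) := by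
    field_simp
  rw [e1, e2, e3, e4, div_div_eq_mul_div, div_div_eq_mul_div, div_eq_iff hd2', div_mul_div_comm,
    div_mul_eq_mul_div, eq_div_iff (mul_ne_zero hQc' hd3'), hL, hR]
  field_simp
  ring

lemma abs_lt_abs_of_normSq (x y : ℂ) (h : Complex.normSq x < Complex.normSq y) :
    ‖x‖ < ‖y‖ := by
  rw [Complex.norm_def, Complex.norm_def]
  exact Real.sqrt_lt_sqrt (Complex.normSq_nonneg _) h

lemma Q_ne (a b C : ℂ) (hC : ‖C‖ = 1) (ha : ‖a‖ < 1)
    (hb : ‖b‖ < 1) : C - b * (starRingEnd ℂ) a ≠ 0 := by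
  intro h
  have h1 : ‖C‖ = ‖b * (starRingEnd ℂ) a‖ := by
    rw [sub_eq_zero.1 h]
  rw [norm_mul, Complex.norm_conj, hC] at h1
  nlinarith [norm_nonneg a, norm_nonneg b]

lemma aprime_mem (a b C : ℂ) (hC : ‖C‖ = 1) (ha : ‖a‖ < 1)
    (hb : ‖b‖ < 1) :
    ‖(C * a - b) / (C - b * (starRingEnd ℂ) a)‖ < 1 := by
  have hQ := Q_ne a b C hC ha hb
  rw [norm_div, div_lt_one (norm_pos_iff.mpr hQ)]
  apply abs_lt_abs_of_normSq
  have h1 : C.re * C.re + C.im * C.im = 1 := by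
    have := Complex.sq_norm C
    rw [hC] at this
    simpa [Complex.normSq_apply] using this.symm
  have ha' : Complex.normSq a < 1 := by rw [← Complex.sq_norm]; nlinarith [norm_nonneg a]
  have hb' : Complex.normSq b < 1 := by rw [← Complex.sq_norm]; nlinarith [norm_nonneg b]
  have key : Complex.normSq (C - b * (starRingEnd ℂ) a) - Complex.normSq (C * a - b)
      = (1 - Complex.normSq a) * (1 - Complex.normSq b) := by
    simp only [Complex.normSq_apply, Complex.sub_re, Complex.sub_im, Complex.mul_re,
      Complex.mul_im, Complex.conj_re, Complex.conj_im]
    linear_combination (1 - a.re * a.re - a.im * a.im) * h1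
  nlinarith [key]

theorem schwarz_pick_equality_case (f : ℂ → ℂ)
    (hf : DifferentiableOn ℂ f (Metric.ball (0 : ℂ) 1))
    (hmaps : Set.MapsTo f (Metric.ball (0 : ℂ) 1) (Metric.ball (0 : ℂ) 1))
    (z₀ w₀ : ℂ) (hz₀ : z₀ ∈ Metric.ball (0 : ℂ) 1) (hw₀ : w₀ ∈ Metric.ball (0 : ℂ) 1)
    (hne : z₀ ≠ w₀)
    (heq : ‖(f z₀ - f w₀) / (1 - (starRingEnd ℂ) (f z₀) * f w₀)‖ =
      ‖(z₀ - w₀) / (1 - (starRingEnd ℂ) z₀ * w₀)‖) :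
    ∃ a ∈ Metric.ball (0 : ℂ) 1, ∃ θ ∈ Set.Ico (0 : ℝ) (2 * Real.pi),
      ∀ z ∈ Metric.ball (0 : ℂ) 1,
        f z = Complex.exp (θ * Complex.I) * ((a - z) / (1 - (starRingEnd ℂ) a * z)) := by
  have hball : ∀ x : ℂ, x ∈ Metric.ball (0 : ℂ) 1 ↔ ‖x‖ < 1 := by
    intro x; simp [Metric.mem_ball, Complex.dist_eq]
  have ha : ‖z₀‖ < 1 := (hball z₀).1 hz₀
  have hw : ‖w₀‖ < 1 := (hball w₀).1 hw₀
  set b := f z₀ with hbdef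
  have hb : ‖b‖ < 1 := (hball b).1 (hmaps hz₀)
  -- the composed map g
  set mA : ℂ → ℂ := fun z => (z₀ - z) / (1 - (starRingEnd ℂ) z₀ * z) with hmA
  set mB : ℂ → ℂ := fun z => (b - z) / (1 - (starRingEnd ℂ) b * z) with hmB
  set g : ℂ → ℂ := mB ∘ f ∘ mA with hgdef
  have hmAmem : Set.MapsTo mA (Metric.ball (0 : ℂ) 1) (Metric.ball (0 : ℂ) 1) := by
    intro z hz
    exact (hball _).2 (mobius_mem z₀ z ha ((hball z).1 hz))
  have hmBmem : Set.MapsTo mB (Metric.ball (0 : ℂ) 1) (Metric.ball (0 : ℂ) 1) := by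
    intro z hz
    exact (hball _).2 (mobius_mem b z hb ((hball z).1 hz))
  have hg0 : g 0 = 0 := by
    have : mA 0 = z₀ := by simp [hmA]
    simp only [hgdef, Function.comp_apply, this, ← hbdef]
    simp [hmB]
  have hgd : DifferentiableOn ℂ g (Metric.ball (0 : ℂ) 1) :=
    (mobius_diff b hb).comp (hf.comp (mobius_diff z₀ ha) hmAmem) (hmaps.comp hmAmem)
  have hgmaps : Set.MapsTo g (Metric.ball (0 : ℂ) 1) (Metric.ball (g 0) 1) := by
    rw [hg0]
    exact hmBmem.comp (hmaps.comp hmAmem)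
  -- the point z₁
  set z₁ : ℂ := mA w₀ with hz₁def
  have hz₁mem : z₁ ∈ Metric.ball (0 : ℂ) 1 := hmAmem hw₀
  have hz₁ne : z₁ ≠ 0 := by
    simp only [hz₁def, hmA]
    exact div_ne_zero (sub_ne_zero.2 hne) (denom_ne z₀ w₀ ha hw)
  have hAinv : mA z₁ = w₀ := mobius_invol z₀ w₀ ha hw
  have hgz₁ : g z₁ = (b - f w₀) / (1 - (starRingEnd ℂ) b * f w₀) := by
    simp only [hgdef, Function.comp_apply, hAinv, hmB]
  have habs : ‖g z₁‖ = ‖z₁‖ := by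
    rw [hgz₁]
    simpa [hz₁def, hmA] using heq
  -- equality in Schwarz lemma
  have h_eq : ‖dslope g 0 z₁‖ = 1 / 1 := by
    rw [dslope_of_ne g hz₁ne, slope_def_field, hg0, sub_zero, sub_zero]
    rw [norm_div, habs]
    rw [div_self (norm_ne_zero_iff.mpr hz₁ne)]
    norm_num
  set C : ℂ := dslope g 0 z₁ with hCdef
  have hCabs : ‖C‖ = 1 := by
    have := h_eq
    simpa using this
  have hC0 : C ≠ 0 := by
    intro h; rw [h] at hCabs; simp at hCabs
  have haff := Complex.affine_of_mapsTo_ball_of_norm_dslope_eq_div hgd (hgmaps.mono_right Metric.ball_subset_closedBall) hz₁mem h_eq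
  have hgz : ∀ z ∈ Metric.ball (0 : ℂ) 1, g z = z * C := by
    intro z hz
    have := haff hz
    simpa [hg0, smul_eq_mul] using this
  -- recover f
  have hfz : ∀ z ∈ Metric.ball (0 : ℂ) 1,
      f z = (b - C * mA z) / (1 - (starRingEnd ℂ) b * (C * mA z)) := by
    intro z hz
    have hy : mA z ∈ Metric.ball (0 : ℂ) 1 := hmAmem hz
    have h1 : g (mA z) = (mA z) * C := hgz (mA z) hy
    have h2 : mA (mA z) = z := mobius_invol z₀ z ha ((hball z).1 hz)
    have h3 : mB (f z) = (mA z) * C := by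
      have := h1
      simp only [hgdef, Function.comp_apply, h2] at this
      exact this
    have hfzmem : ‖f z‖ < 1 := (hball _).1 (hmaps hz)
    have h4 : mB (mB (f z)) = f z := mobius_invol b (f z) hb hfzmem
    rw [← h4, h3]
    simp only [hmB, mul_comm (mA z) C]
  -- the automorphism data
  set a' : ℂ := (C * z₀ - b) / (C - b * (starRingEnd ℂ) z₀) with ha'def
  have ha'mem : ‖a'‖ < 1 := aprime_mem z₀ b C hCabs ha hb
  set u : ℂ := (b * (starRingEnd ℂ) z₀ - C) /
      (C * (starRingEnd ℂ) (C - b * (starRingEnd ℂ) z₀)) with hudef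
  have hQ : C - b * (starRingEnd ℂ) z₀ ≠ 0 := Q_ne z₀ b C hCabs ha hb
  have huabs : ‖u‖ = 1 := by
    rw [hudef, norm_div, norm_mul, Complex.norm_conj, hCabs, one_mul]
    rw [show b * (starRingEnd ℂ) z₀ - C = -(C - b * (starRingEnd ℂ) z₀) by ring, norm_neg]
    exact div_self (norm_ne_zero_iff.mpr hQ)
  have hu0 : u ≠ 0 := by intro h; rw [h] at huabs; simp at huabs
  -- choose θ
  set θ : ℝ := if 0 ≤ u.arg then u.arg else u.arg + 2 * Real.pi with hθdef
  have hθmem : θ ∈ Set.Ico (0 : ℝ) (2 * Real.pi) := by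
    rw [hθdef]
    split_ifs with h
    · exact ⟨h, lt_of_le_of_lt (Complex.arg_le_pi u) (by nlinarith [Real.pi_pos])⟩
    · push_neg at h
      constructor
      · nlinarith [Complex.neg_pi_lt_arg u, Real.pi_pos]
      · nlinarith
  have hexp : Complex.exp (θ * Complex.I) = u := by
    have habs1 : (‖u‖ : ℂ) * Complex.exp (u.arg * Complex.I) = u :=
      Complex.norm_mul_exp_arg_mul_I u
    rw [huabs] at habs1
    rw [hθdef]
    split_ifs with h
    · simpa using habs1
    · push_cast
      rw [add_mul, Complex.exp_add, Complex.exp_two_pi_mul_I, mul_one]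
      simpa using habs1
  refine ⟨a', (hball a').2 ha'mem, θ, hθmem, ?_⟩
  intro z hz
  have hzlt : ‖z‖ < 1 := (hball z).1 hz
  have hCc : (starRingEnd ℂ) C = C⁻¹ := by
    apply eq_inv_of_mul_eq_one_left
    rw [mul_comm, Complex.mul_conj]
    norm_cast
    rw [← Complex.sq_norm, hCabs]; norm_num
  have hd1 : 1 - (starRingEnd ℂ) z₀ * z ≠ 0 := denom_ne z₀ z ha hzlt
  have hCmA : ‖C * mA z‖ < 1 := by
    rw [norm_mul, hCabs, one_mul]
    exact mobius_mem z₀ z ha hzlt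
  have hd2 : 1 - (starRingEnd ℂ) b * (C * ((z₀ - z) / (1 - (starRingEnd ℂ) z₀ * z))) ≠ 0 := by
    have := denom_ne b (C * mA z) hb hCmA
    simpa [hmA] using this
  have hQc : (starRingEnd ℂ) C - (starRingEnd ℂ) b * z₀ ≠ 0 := by
    intro h; apply hQ
    have : (starRingEnd ℂ) ((starRingEnd ℂ) C - (starRingEnd ℂ) b * z₀) = 0 := by
      rw [h]; simp
    simpa [map_sub, map_mul] using this
  have hd3' : 1 - (starRingEnd ℂ) a' * z ≠ 0 := denom_ne a' z ha'mem hzlt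
  have hconja' : (starRingEnd ℂ) a' =
      ((starRingEnd ℂ) C * (starRingEnd ℂ) z₀ - (starRingEnd ℂ) b) /
        ((starRingEnd ℂ) C - (starRingEnd ℂ) b * z₀) := by
    rw [ha'def, map_div₀, map_sub, map_sub, map_mul, map_mul, Complex.conj_conj]
  have hd3 : 1 - (((starRingEnd ℂ) C * (starRingEnd ℂ) z₀ - (starRingEnd ℂ) b) /
      ((starRingEnd ℂ) C - (starRingEnd ℂ) b * z₀)) * z ≠ 0 := by
    rw [← hconja']; exact hd3'
  have hu' : u = (b * (starRingEnd ℂ) z₀ - C) /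
      (C * ((starRingEnd ℂ) C - (starRingEnd ℂ) b * z₀)) := by
    rw [hudef, map_sub, map_mul, Complex.conj_conj]
  calc f z = (b - C * ((z₀ - z) / (1 - (starRingEnd ℂ) z₀ * z))) /
        (1 - (starRingEnd ℂ) b * (C * ((z₀ - z) / (1 - (starRingEnd ℂ) z₀ * z)))) := by
        rw [hfz z hz]
    _ = ((b * (starRingEnd ℂ) z₀ - C) / (C * ((starRingEnd ℂ) C - (starRingEnd ℂ) b * z₀))) *
        (((C * z₀ - b) / (C - b * (starRingEnd ℂ) z₀) - z) /
          (1 - (((starRingEnd ℂ) C * (starRingEnd ℂ) z₀ - (starRingEnd ℂ) b) /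
            ((starRingEnd ℂ) C - (starRingEnd ℂ) b * z₀)) * z)) :=
        key_alg z₀ b z C ((starRingEnd ℂ) z₀) ((starRingEnd ℂ) b) ((starRingEnd ℂ) C)
          hC0 hCc hd1 hd2 hQ hQc hd3
    _ = Complex.exp (θ * Complex.I) * ((a' - z) / (1 - (starRingEnd ℂ) a' * z)) := by
        rw [hexp, hu', hconja', ha'def]
end

section
/- For 0 < r < 1, the Euclidean arc length of the upper boundary arc of ⋃_{x∈(-1,1)} D_ρ(x,r) (the arc of the circle of center -i(1-r²)/(2r) and radius (1+r²)/(2r) joining -1 to 1 inside the closed unit disk) equals 2·((1+r²)/r)·arctan r. -/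
open Complex

lemma arctan_key (r : ℝ) (hr0 : 0 < r) (hr1 : r < 1) :
    Real.arctan ((1 - r ^ 2) / (2 * r)) = Real.pi / 2 - 2 * Real.arctan r := by
  have har : Real.arctan r < Real.pi / 4 := by
    have := Real.arctan_strictMono hr1
    simpa [Real.arctan_one] using this
  have har0 : 0 < Real.arctan r := by simpa using Real.arctan_strictMono hr0
  have h1 : Real.pi / 2 - 2 * Real.arctan r ∈ Set.Ioo (-(Real.pi/2)) (Real.pi/2) := by
    constructor <;> nlinarith [Real.pi_pos]
  have htan : Real.tan (Real.pi / 2 - 2 * Real.arctan r) = (1 - r ^ 2) / (2 * r) := by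
    rw [Real.tan_pi_div_two_sub, Real.tan_two_mul, Real.tan_arctan]
    rw [inv_div]
  rw [← htan, Real.arctan_tan h1.1 h1.2]

theorem arc_length_of_upper_boundary (r : ℝ) (hr0 : 0 < r) (hr1 : r < 1) :
    (∫ θ in Real.arctan ((1 - r ^ 2) / (2 * r))..(Real.pi - Real.arctan ((1 - r ^ 2) / (2 * r))),
        ‖deriv (fun t : ℝ =>
          -Complex.I * ((1 - r ^ 2) / (2 * r)) +
            ((1 + r ^ 2) / (2 * r)) * Complex.exp (t * Complex.I)) θ‖) =
      2 * ((1 + r ^ 2) / r) * Real.arctan r := by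
  have hR : (0:ℝ) < (1 + r ^ 2) / (2 * r) := by positivity
  have hderiv : ∀ θ : ℝ, deriv (fun t : ℝ =>
      -Complex.I * ((1 - r ^ 2) / (2 * r)) +
        ((1 + r ^ 2) / (2 * r)) * Complex.exp (t * Complex.I)) θ
      = ((1 + r ^ 2) / (2 * r) : ℂ) * (Complex.exp (θ * Complex.I) * Complex.I) := by
    intro θ
    have h1 : HasDerivAt (fun t : ℝ => (t : ℂ) * Complex.I) Complex.I θ := by
      simpa using (Complex.ofRealCLM.hasDerivAt (x := θ)).mul_const Complex.I
    have h2 : HasDerivAt (fun t : ℝ => Complex.exp (t * Complex.I))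
        (Complex.exp (θ * Complex.I) * Complex.I) θ := by
      exact (Complex.hasDerivAt_exp ((θ:ℂ) * Complex.I)).comp θ h1
    have h3 := ((h2.const_mul (((1 + r ^ 2) / (2 * r) : ℝ) : ℂ)).const_add
      (-Complex.I * ((1 - r ^ 2) / (2 * r) : ℝ)))
    simpa using h3.deriv
  have habs : ∀ θ : ℝ, ‖deriv (fun t : ℝ =>
      -Complex.I * ((1 - r ^ 2) / (2 * r)) +
        ((1 + r ^ 2) / (2 * r)) * Complex.exp (t * Complex.I)) θ‖
      = (1 + r ^ 2) / (2 * r) := by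
    intro θ
    rw [hderiv θ]
    simp [Complex.norm_exp_ofReal_mul_I, abs_of_pos hr0]
    rw [show ‖(1 + (r:ℂ) ^ 2)‖ = 1 + r ^ 2 by
      rw [show (1 + (r:ℂ)^2) = ((1 + r^2 : ℝ) : ℂ) by push_cast; ring, Complex.norm_real, Real.norm_eq_abs,
        abs_of_pos (by positivity)]]
  rw [intervalIntegral.integral_congr (fun θ _ => habs θ),
    intervalIntegral.integral_const]
  rw [arctan_key r hr0 hr1]
  have : Real.pi - (Real.pi / 2 - 2 * Real.arctan r) - (Real.pi / 2 - 2 * Real.arctan r)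
      = 4 * Real.arctan r := by ring
  rw [smul_eq_mul]
  field_simp
  ring
end

section
/- For 0 < r < 1, the Euclidean area (two-dimensional Lebesgue measure) of ⋃_{x∈(-1,1)} D_ρ(x,r) equals ((1+r²)/r)²·arctan r − (1−r²)/r. -/
set_option maxHeartbeats 1000000

open Complex MeasureTheory Set Real


lemma abs_div_lt_iff' (a b : ℂ) (r : ℝ) (hr : 0 < r) (hb : b ≠ 0) :
    ‖a / b‖ < r ↔ Complex.normSq a < r ^ 2 * Complex.normSq b := by
  rw [norm_div, div_lt_iff₀ (norm_pos_iff.mpr hb)]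
  constructor
  · intro h
    have := mul_self_lt_mul_self (norm_nonneg _) h
    rw [← sq, Complex.sq_norm] at this
    calc Complex.normSq a < (r * ‖b‖) * (r * ‖b‖) := this
    _ = r ^ 2 * Complex.normSq b := by rw [← Complex.sq_norm]; ring
  · intro h
    have h2 : ‖a‖ ^ 2 < (r * ‖b‖) ^ 2 := by
      rw [Complex.sq_norm, mul_pow, Complex.sq_norm]; linarith [h]
    exact lt_of_pow_lt_pow_left₀ 2 (by positivity) h2

lemma union_eq_region (r : ℝ) (hr0 : 0 < r) (hr1 : r < 1) :
    (⋃ x ∈ Set.Ioo (-1 : ℝ) 1,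
        {z : ℂ | ‖z‖ < 1 ∧ ‖(z - (x : ℂ)) / (1 - (x : ℂ) * z)‖ < r})
    = {z : ℂ | z.im ^ 2 + ((1 - r ^ 2) / r) * |z.im| + z.re ^ 2 < 1} := by
  ext z
  set u := z.re with hu
  set v := z.im with hv
  simp only [mem_iUnion, mem_setOf_eq, exists_prop, Set.mem_Ioo]
  have habs1 : ‖z‖ < 1 ↔ u ^ 2 + v ^ 2 < 1 := by
    rw [show ‖z‖ < 1 ↔ ‖z‖ ^ 2 < 1 ^ 2 from
      (sq_lt_sq₀ (norm_nonneg _) zero_le_one).symm]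
    rw [Complex.sq_norm, Complex.normSq_apply, one_pow]
    constructor <;> intro h <;> nlinarith
  have hw0 : 0 ≤ |v| := abs_nonneg v
  have hw2 : |v| ^ 2 = v ^ 2 := sq_abs v
  have hr2 : (0:ℝ) ≤ 1 - r ^ 2 := by nlinarith
  constructor
  · rintro ⟨x, ⟨hx1, hx2⟩, hz1, hz2⟩
    have hs : u ^ 2 + v ^ 2 < 1 := habs1.mp hz1
    have hb : (1 : ℂ) - (x : ℂ) * z ≠ 0 := by
      intro h
      have h1 : ‖(x:ℂ) * z‖ = 1 := by
        have : (x:ℂ) * z = 1 := by linear_combination -h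
        rw [this]; simp
      rw [norm_mul, Complex.norm_real, Real.norm_eq_abs] at h1
      nlinarith [norm_nonneg z, abs_nonneg x,
        abs_lt.mpr ⟨hx1, hx2⟩, hz1]
    rw [abs_div_lt_iff' _ _ r hr0 hb] at hz2
    have h2 : (u - x) ^ 2 + v ^ 2 < r ^ 2 * ((1 - x * u) ^ 2 + (x * v) ^ 2) := by
      have e1 : Complex.normSq (z - (x:ℂ)) = (u - x) ^ 2 + v ^ 2 := by
        simp [Complex.normSq_apply]; ring
      have e2 : Complex.normSq (1 - (x:ℂ) * z) = (1 - x * u) ^ 2 + (x * v) ^ 2 := by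
        simp [Complex.normSq_apply]; ring
      rwa [e1, e2] at hz2
    have hA : 0 < 1 - r ^ 2 * (u ^ 2 + v ^ 2) := by nlinarith
    have key : v ^ 2 * (1 - r ^ 2) ^ 2 < r ^ 2 * (1 - (u ^ 2 + v ^ 2)) ^ 2 := by
      nlinarith [sq_nonneg ((1 - r^2*(u^2+v^2)) * x - u * (1 - r^2)), mul_pos hA hA,
        mul_lt_mul_of_pos_left h2 hA]
    have key2 : |v| * (1 - r ^ 2) < r * (1 - (u ^ 2 + v ^ 2)) := by
      nlinarith [mul_pos hr0 (show (0:ℝ) < 1 - (u^2+v^2) by nlinarith),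
        mul_nonneg hw0 hr2]
    have h3 : (1 - r ^ 2) / r * |v| < 1 - u ^ 2 - v ^ 2 := by
      rw [div_mul_eq_mul_div, div_lt_iff₀ hr0]; nlinarith [key2]
    linarith
  · intro hS
    have hk : (1 - r ^ 2) * |v| < r * (1 - u ^ 2 - v ^ 2) := by
      have : (1 - r ^ 2) / r * |v| < 1 - u ^ 2 - v ^ 2 := by linarith
      rw [div_mul_eq_mul_div, div_lt_iff₀ hr0] at this; linarith
    have hdiv0 : 0 ≤ (1 - r ^ 2) / r * |v| := by positivity
    have hs : u ^ 2 + v ^ 2 < 1 := by linarith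
    have hz1 : ‖z‖ < 1 := habs1.mpr hs
    have hA : 0 < 1 - r ^ 2 * (u ^ 2 + v ^ 2) := by nlinarith
    have h9 : u ^ 2 < 1 := by nlinarith [sq_nonneg v]
    have hu1 : |u| < 1 := by nlinarith [_root_.sq_abs u, abs_nonneg u]
    have hnum : |u| * (1 - r ^ 2) < 1 - r ^ 2 * (u ^ 2 + v ^ 2) := by
      nlinarith [_root_.sq_abs u, abs_nonneg u, _root_.sq_abs v,
        mul_pos (mul_pos hr0 hr0) (mul_pos (sub_pos.mpr hu1) (sub_pos.mpr hu1)),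
        mul_nonneg (mul_nonneg (mul_nonneg hr0.le hr0.le) hw0) hw0]
    obtain ⟨x, hxA, hx1, hx2⟩ : ∃ x : ℝ,
        (1 - r ^ 2 * (u ^ 2 + v ^ 2)) * x = u * (1 - r ^ 2) ∧ -1 < x ∧ x < 1 := by
      refine ⟨u * (1 - r ^ 2) / (1 - r ^ 2 * (u ^ 2 + v ^ 2)), by field_simp, ?_⟩
      have habsx : |u * (1 - r ^ 2) / (1 - r ^ 2 * (u ^ 2 + v ^ 2))| < 1 := by
        rw [abs_div, _root_.abs_of_pos hA, abs_mul, _root_.abs_of_nonneg hr2,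
          div_lt_one hA]
        exact hnum
      exact abs_lt.mp habsx
    refine ⟨x, ⟨hx1, hx2⟩, hz1, ?_⟩
    have hb : (1 : ℂ) - (x : ℂ) * z ≠ 0 := by
      intro h
      have h1 : ‖(x:ℂ) * z‖ = 1 := by
        have : (x:ℂ) * z = 1 := by linear_combination -h
        rw [this]; simp
      rw [norm_mul, Complex.norm_real, Real.norm_eq_abs] at h1
      nlinarith [norm_nonneg z, abs_nonneg x,
        abs_lt.mpr ⟨hx1, hx2⟩, hz1]
    rw [abs_div_lt_iff' _ _ r hr0 hb]
    have e1 : Complex.normSq (z - (x:ℂ)) = (u - x) ^ 2 + v ^ 2 := by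
      simp [Complex.normSq_apply]; ring
    have e2 : Complex.normSq (1 - (x:ℂ) * z) = (1 - x * u) ^ 2 + (x * v) ^ 2 := by
      simp [Complex.normSq_apply]; ring
    rw [e1, e2]
    have keysq : v ^ 2 * (1 - r ^ 2) ^ 2 < r ^ 2 * (1 - (u ^ 2 + v ^ 2)) ^ 2 := by
      nlinarith [mul_self_lt_mul_self (mul_nonneg hr2 hw0) hk]
    have hval : (1 - r ^ 2 * (u ^ 2 + v ^ 2)) *
        (((u - x) ^ 2 + v ^ 2) - r ^ 2 * ((1 - x * u) ^ 2 + (x * v) ^ 2)) =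
        v ^ 2 * (1 - r ^ 2) ^ 2 - r ^ 2 * (1 - (u ^ 2 + v ^ 2)) ^ 2 := by
      linear_combination ((1 - r ^ 2 * (u ^ 2 + v ^ 2)) * x - u * (1 - r ^ 2)) * hxA
    nlinarith [hval, keysq, hA]


lemma hasDerivAt_F (c : ℝ) (hc : 1 < c) (x : ℝ) (hx : x ^ 2 < c) :
    HasDerivAt (fun t => (t * Real.sqrt (c - t ^ 2)
        + c * Real.arcsin (t / Real.sqrt c)) / 2) (Real.sqrt (c - x ^ 2)) x := by
  have hc0 : 0 < c := by linarith
  have hpos : 0 < c - x ^ 2 := by linarith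
  set y := Real.sqrt (c - x ^ 2) with hy
  have hy0 : 0 < y := Real.sqrt_pos.mpr hpos
  have hy2 : y ^ 2 = c - x ^ 2 := Real.sq_sqrt hpos.le
  have hR0 : 0 < Real.sqrt c := Real.sqrt_pos.mpr hc0
  have hR2 : (Real.sqrt c) ^ 2 = c := Real.sq_sqrt hc0.le
  have hinner : HasDerivAt (fun t : ℝ => c - t ^ 2) (-(2 * x)) x := by
    simpa using ((hasDerivAt_pow 2 x).const_sub c)
  have hsq : HasDerivAt (fun t : ℝ => Real.sqrt (c - t ^ 2))
      (1 / (2 * y) * (-(2 * x))) x :=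
    (Real.hasDerivAt_sqrt hpos.ne').comp x hinner
  have h1 : HasDerivAt (fun t : ℝ => t * Real.sqrt (c - t ^ 2))
      (1 * y + x * (1 / (2 * y) * (-(2 * x)))) x := (hasDerivAt_id x).mul hsq
  have hlt : |x / Real.sqrt c| < 1 := by
    rw [abs_div, _root_.abs_of_pos hR0, div_lt_one hR0]
    nlinarith [abs_nonneg x, _root_.sq_abs x]
  have hne1 : x / Real.sqrt c ≠ -1 := by
    intro h; rw [h] at hlt; simp at hlt
  have hne2 : x / Real.sqrt c ≠ 1 := by
    intro h; rw [h] at hlt; simp at hlt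
  have hdiv : HasDerivAt (fun t : ℝ => t / Real.sqrt c) (1 / Real.sqrt c) x := by
    simpa [div_eq_mul_inv] using (hasDerivAt_id x).mul_const (Real.sqrt c)⁻¹
  have harc : HasDerivAt (fun t : ℝ => Real.arcsin (t / Real.sqrt c))
      (1 / Real.sqrt (1 - (x / Real.sqrt c) ^ 2) * (1 / Real.sqrt c)) x :=
    by have := (Real.hasDerivAt_arcsin hne1 hne2).comp x hdiv; exact this
  have e3 : Real.sqrt (1 - (x / Real.sqrt c) ^ 2) = y / Real.sqrt c := by
    rw [show 1 - (x / Real.sqrt c) ^ 2 = (c - x ^ 2) / c by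
          rw [div_pow, hR2]; field_simp,
        Real.sqrt_div hpos.le, hy]
  have htot := (h1.add (harc.const_mul c)).div_const 2
  rw [e3] at htot
  refine htot.congr_deriv (Eq.symm ?_)
  have hyne : y ≠ 0 := hy0.ne'
  have hRne : Real.sqrt c ≠ 0 := hR0.ne'
  field_simp
  linear_combination hy2

lemma integral_sqrt_c_sub_sq (c : ℝ) (hc : 1 < c) :
    ∫ x in (-1 : ℝ)..1, Real.sqrt (c - x ^ 2)
      = Real.sqrt (c - 1) + c * Real.arcsin (1 / Real.sqrt c) := by
  have key := intervalIntegral.integral_eq_sub_of_hasDerivAt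
    (f := fun t : ℝ => (t * Real.sqrt (c - t ^ 2)
        + c * Real.arcsin (t / Real.sqrt c)) / 2)
    (f' := fun t : ℝ => Real.sqrt (c - t ^ 2)) (a := (-1:ℝ)) (b := (1:ℝ))
    (fun x hx => by
      rw [Set.uIcc_of_le (by norm_num : (-1:ℝ) ≤ 1)] at hx
      exact hasDerivAt_F c hc x (by nlinarith [hx.1, hx.2]))
    (Continuous.intervalIntegrable
      (Real.continuous_sqrt.comp (by continuity)) _ _)
  rw [key]
  norm_num [Real.arcsin_neg, neg_div]
  ring


lemma arctan_double (r : ℝ) (hr0 : 0 < r) (hr1 : r < 1) :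
    Real.arctan (2 * r / (1 - r ^ 2)) = 2 * Real.arctan r := by
  have h4 : Real.arctan r < π / 4 := by
    rw [← Real.arctan_one]; exact Real.arctan_strictMono hr1
  have h0 : 0 < Real.arctan r := by
    rw [← Real.arctan_zero]; exact Real.arctan_strictMono hr0
  have htan : Real.tan (2 * Real.arctan r) = 2 * r / (1 - r ^ 2) := by
    rw [Real.tan_two_mul, Real.tan_arctan]
  rw [← htan, Real.arctan_tan (by linarith [Real.pi_pos]) (by linarith [Real.pi_pos])]

lemma arcsin_inv_sqrt (k : ℝ) (hk : 0 < k) :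
    Real.arcsin (1 / Real.sqrt (1 + k ^ 2)) = Real.arctan (1 / k) := by
  rw [Real.arctan_eq_arcsin]
  congr 1
  rw [show 1 + (1 / k) ^ 2 = (1 + k ^ 2) / k ^ 2 by field_simp; ring,
    Real.sqrt_div (by positivity) (k ^ 2), Real.sqrt_sq hk.le]
  have h1 : (0:ℝ) < Real.sqrt (1 + k ^ 2) := Real.sqrt_pos.mpr (by positivity)
  field_simp


lemma volume_region (r : ℝ) (hr0 : 0 < r) (hr1 : r < 1) :
    volume {z : ℂ | z.im ^ 2 + ((1 - r ^ 2) / r) * |z.im| + z.re ^ 2 < 1}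
      = ENNReal.ofReal (((1 + r ^ 2) / r) ^ 2 * Real.arctan r - (1 - r ^ 2) / r) := by
  have hr2 : (0:ℝ) < 1 - r ^ 2 := by nlinarith
  set k : ℝ := (1 - r ^ 2) / (2 * r) with hkdef
  have hk0 : 0 < k := div_pos hr2 (by linarith)
  have h2k : (1 - r ^ 2) / r = 2 * k := by rw [hkdef]; field_simp
  set c : ℝ := 1 + k ^ 2 with hcdef
  have hc1 : 1 < c := by nlinarith
  set f : ℝ → ℝ := fun u => Real.sqrt (c - u ^ 2) - k with hfdef
  have hfc : Continuous f := by
    apply Continuous.sub _ continuous_const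
    exact Real.continuous_sqrt.comp (by continuity)
  have hset : {z : ℂ | z.im ^ 2 + ((1 - r ^ 2) / r) * |z.im| + z.re ^ 2 < 1}
      = Complex.measurableEquivRealProd ⁻¹'
        regionBetween (-f) f (Set.Ioo (-1) 1) := by
    ext z
    set u := z.re
    set v := z.im
    simp only [mem_setOf_eq, mem_preimage, Complex.measurableEquivRealProd_apply,
      regionBetween, mem_Ioo, h2k, Pi.neg_apply]
    have hfu' : f u = Real.sqrt (c - u ^ 2) - k := rfl
    constructor
    · intro h
      have hv0 : 0 ≤ 2 * k * |v| := by positivity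
      have hw2 : |v| ^ 2 = v ^ 2 := sq_abs v
      have hu2 : u ^ 2 < 1 := by nlinarith [abs_nonneg v]
      have hu1 : |u| < 1 := by nlinarith [_root_.sq_abs u, abs_nonneg u]
      have hfu : |v| < f u := by
        rw [hfu']
        have : |v| + k < Real.sqrt (c - u ^ 2) := by
          rw [Real.lt_sqrt (by positivity)]
          nlinarith [abs_nonneg v]
        linarith
      exact ⟨abs_lt.mp hu1, abs_lt.mp hfu⟩
    · rintro ⟨⟨hu1, hu2⟩, hv1, hv2⟩
      have hfu : |v| < f u := abs_lt.mpr ⟨hv1, hv2⟩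
      have h1 : |v| + k < Real.sqrt (c - u ^ 2) := by
        rw [hfu'] at hfu; linarith
      rw [Real.lt_sqrt (by positivity)] at h1
      nlinarith [_root_.sq_abs v, abs_nonneg v]
  rw [hset]
  have hmeas : MeasurableSet (regionBetween (-f) f (Set.Ioo (-1:ℝ) 1)) :=
    measurableSet_regionBetween (hfc.neg.measurable) hfc.measurable measurableSet_Ioo
  rw [Complex.volume_preserving_equiv_real_prod.measure_preimage hmeas.nullMeasurableSet]
  have hfpos : ∀ x ∈ Set.Ioo (-1:ℝ) 1, 0 < f x := by
    intro x hx
    have : f x = Real.sqrt (c - x ^ 2) - k := rfl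
    rw [this, sub_pos]
    rw [show k = Real.sqrt (k ^ 2) from (Real.sqrt_sq hk0.le).symm]
    apply Real.sqrt_lt_sqrt (by positivity)
    rcases hx with ⟨h1, h2⟩; nlinarith
  have hint : IntegrableOn f (Set.Ioo (-1:ℝ) 1) volume :=
    (hfc.integrableOn_Icc).mono_set Set.Ioo_subset_Icc_self
  rw [show (volume : Measure (ℝ × ℝ)) = volume.prod volume from Measure.volume_eq_prod ℝ ℝ,
    volume_regionBetween_eq_integral hint.neg hint measurableSet_Ioo
      (fun x hx => by
        simp only [Pi.neg_apply]
        linarith [hfpos x hx])]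
  congr 1
  have e1 : ∫ y in Set.Ioo (-1:ℝ) 1, (f - (-f)) y
      = ∫ y in (-1:ℝ)..1, 2 * f y := by
    rw [intervalIntegral.integral_of_le (by norm_num : (-1:ℝ) ≤ 1),
      integral_Ioc_eq_integral_Ioo]
    apply setIntegral_congr_fun measurableSet_Ioo
    intro x _; simp [two_mul]
  rw [e1]
  have hι : IntervalIntegrable (fun x : ℝ => Real.sqrt (c - x ^ 2)) volume (-1) 1 :=
    Continuous.intervalIntegrable (Real.continuous_sqrt.comp (by continuity)) _ _
  have e2 : ∫ y in (-1:ℝ)..1, 2 * f y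
      = 2 * ((∫ x in (-1:ℝ)..1, Real.sqrt (c - x ^ 2)) - 2 * k) := by
    rw [hfdef]
    rw [intervalIntegral.integral_const_mul]
    congr 1
    rw [intervalIntegral.integral_sub hι (intervalIntegrable_const)]
    simp
    left; ring
  rw [e2, integral_sqrt_c_sub_sq c hc1]
  have e3 : Real.sqrt (c - 1) = k := by
    rw [hcdef]; simp [Real.sqrt_sq hk0.le]
  have e4 : Real.arcsin (1 / Real.sqrt c) = 2 * Real.arctan r := by
    rw [hcdef, arcsin_inv_sqrt k hk0, show 1 / k = 2 * r / (1 - r ^ 2) by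
      rw [hkdef]; field_simp, arctan_double r hr0 hr1]
  rw [e3, e4, hcdef, hkdef]
  field_simp
  ring

theorem area_of_union_pseudohyperbolic_disks (r : ℝ) (hr0 : 0 < r) (hr1 : r < 1) :
    volume (⋃ x ∈ Set.Ioo (-1 : ℝ) 1,
        {z : ℂ | ‖z‖ < 1 ∧ ‖(z - (x : ℂ)) / (1 - (x : ℂ) * z)‖ < r}) =
      ENNReal.ofReal (((1 + r ^ 2) / r) ^ 2 * Real.arctan r - (1 - r ^ 2) / r) := by
  rw [union_eq_region r hr0 hr1]
  exact volume_region r hr0 hr1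
end
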